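/- If U and V are n×n integer matrices with |det U| = |det V| = m ≥ 1 and U ≡ V (mod m), then U·V⁻¹ is an integer matrix with determinant ±1 (a unimodular matrix). -/

import Mathlib

/-- If `U, V` are `n×n` integer matrices with `|det U| = |det V| = m ≥ 1` and
`U ≡ V (mod m)`, then `U * V⁻¹` (computed over `ℚ`) is an integer matrix of
determinant `±1`, i.e. unimodular. -/
theorem mul_inv_unimodular_of_mod_eq (n m : ℕ) (hm : 0 < m)
    (U V : Matrix (Fin n) (Fin n) ℤ)
    (hU : U.det.natAbs = m) (hV : V.det.natAbs = m)
    (h : ∀ i j, (m : ℤ) ∣ (U i j - V i j)) :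
    (∀ i j, ∃ z : ℤ,
        ((U.map (Int.cast : ℤ → ℚ)) * (V.map (Int.cast : ℤ → ℚ))⁻¹) i j = (z : ℚ)) ∧
      (((U.map (Int.cast : ℤ → ℚ)) * (V.map (Int.cast : ℤ → ℚ))⁻¹).det = 1 ∨
        ((U.map (Int.cast : ℤ → ℚ)) * (V.map (Int.cast : ℤ → ℚ))⁻¹).det = -1) := by
  have hVd : V.det ≠ 0 := by
    intro h0
    rw [h0] at hV
    simp at hV
    omega
  -- divisibility of entries of U * adjugate V by det V
  have hdvd : ∀ i j, V.det ∣ (U * V.adjugate) i j := by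
    intro i j
    have key : (U * V.adjugate) i j
        = ((U - V) * V.adjugate) i j + (V * V.adjugate) i j := by
      simp [Matrix.sub_mul]
    rw [key]
    have h1 : V.det ∣ ((U - V) * V.adjugate) i j := by
      have hm' : (m : ℤ) ∣ ((U - V) * V.adjugate) i j := by
        rw [Matrix.mul_apply]
        refine Finset.dvd_sum fun k _ => ?_
        exact Dvd.dvd.mul_right (by simpa using h i k) _
      rw [← hV] at hm'
      exact Int.natAbs_dvd.mp hm'
    have h2 : V.det ∣ (V * V.adjugate) i j := by
      rw [Matrix.mul_adjugate]
      exact Dvd.intro _ rfl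
    exact dvd_add h1 h2
  set Z : Matrix (Fin n) (Fin n) ℤ := fun i j => (U * V.adjugate) i j / V.det with hZdef
  have hZsmul : V.det • Z = U * V.adjugate := by
    ext i j
    exact Int.mul_ediv_cancel' (hdvd i j)
  have hZV : Z * V = U := by
    have : V.det • (Z * V) = V.det • U := by
      rw [← Matrix.smul_mul, hZsmul, Matrix.mul_assoc, Matrix.adjugate_mul,
        Matrix.mul_smul, Matrix.mul_one]
    ext i j
    have := congrFun (congrFun this i) j
    simp only [Matrix.smul_apply, smul_eq_mul] at this
    exact mul_left_cancel₀ hVd this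
  -- over ℚ
  set c : ℤ →+* ℚ := Int.castRingHom ℚ with hc
  have hdm : ∀ M : Matrix (Fin n) (Fin n) ℤ,
      (M.map (Int.cast : ℤ → ℚ)).det = (M.det : ℚ) := by
    intro M
    rw [show (Int.cast : ℤ → ℚ) = ⇑c from rfl, ← RingHom.mapMatrix_apply,
      ← RingHom.map_det]
  have hBdet : IsUnit ((V.map (Int.cast : ℤ → ℚ)).det) := by
    rw [hdm]
    exact isUnit_iff_ne_zero.mpr (by exact_mod_cast hVd)
  have hmap : Z.map (Int.cast : ℤ → ℚ) * V.map (Int.cast : ℤ → ℚ)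
      = U.map (Int.cast : ℤ → ℚ) := by
    ext i j
    have := congrFun (congrFun hZV i) j
    simp only [Matrix.mul_apply, Matrix.map_apply] at this ⊢
    exact_mod_cast this
  have hmain : (U.map (Int.cast : ℤ → ℚ)) * (V.map (Int.cast : ℤ → ℚ))⁻¹
      = Z.map (Int.cast : ℤ → ℚ) := by
    rw [← hmap]
    exact Matrix.mul_nonsing_inv_cancel_right _ _ hBdet
  constructor
  · intro i j
    exact ⟨Z i j, by rw [hmain]; simp [Matrix.map_apply]⟩
  · -- determinant
    have hdetZ : Z.det * V.det = U.det := by rw [← Matrix.det_mul, hZV]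
    have habs : Z.det.natAbs = 1 := by
      have h' : (Z.det * V.det).natAbs = U.det.natAbs := by rw [hdetZ]
      rw [Int.natAbs_mul, hV, hU] at h'
      exact Nat.eq_of_mul_eq_mul_right hm (by simpa using h')
    have hZ1 : Z.det = 1 ∨ Z.det = -1 := Int.natAbs_eq_iff.mp habs |>.imp id (by simp)
    rw [hmain, hdm]
    rcases hZ1 with h1 | h1 <;> simp [h1]
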